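/- Let z and y be solutions on [0,T] of z'(t) = Q_t(z(t)) and y'(t) = Q̃(y(t)) respectively, with z(0), y(0) ∈ B_r(0), where Q_t is the T/N-periodic switching vector field Q_t(x) = m A_i Σ(W_i x + b_i) and Q̃(x) = ∑_{i=1}^m A_i Σ(W_i x + b_i). Let c = m sup_i ‖A_i‖ |Σ(b_i)|, L = m sup_i K ‖A_i‖ ‖W_i‖, K̃ = L, and X = c + L(r + cT) e^{LT}. Then for all t ∈ [0,T], |z(t) − y(t)| ≤ ( 2(T/N) X + K̃ X T²/(2N) + |z(0) − y(0)| ) e^{K̃ t}. -/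

import Mathlib

open Metric Set MeasureTheory intervalIntegral

/-- Coordinatewise application of an activation function on `ℝ^d` with the L¹ norm. -/
noncomputable def actVec (d : ℕ) (σ : ℝ → ℝ) (v : PiLp 1 (fun _ : Fin d => ℝ)) :
    PiLp 1 (fun _ : Fin d => ℝ) :=
  WithLp.toLp 1 (fun i => σ (v i))

lemma integral_abs_sub_of_le {a c : ℝ} (h0 : 0 ≤ a) (hac : a ≤ c) :
    ∫ w in (0:ℝ)..c, |a - w| = (a^2 + (c-a)^2)/2 := by
  have h1 : ∫ w in (0:ℝ)..a, |a - w| = a^2/2 := by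
    rw [intervalIntegral.integral_congr (g := fun w => a - w)
      (fun w hw => by
        rw [uIcc_of_le h0] at hw
        exact abs_of_nonneg (by linarith [hw.1, hw.2]))]
    rw [intervalIntegral.integral_sub intervalIntegrable_const intervalIntegrable_id,
      intervalIntegral.integral_const, integral_id, smul_eq_mul]
    ring
  have h2 : ∫ w in a..c, |a - w| = (c-a)^2/2 := by
    rw [intervalIntegral.integral_congr (g := fun w => w - a)
      (fun w hw => by
        rw [uIcc_of_le hac] at hw
        rw [abs_sub_comm]
        exact abs_of_nonneg (by linarith [hw.1, hw.2]))]
    rw [intervalIntegral.integral_sub intervalIntegrable_id intervalIntegrable_const,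
      intervalIntegral.integral_const, integral_id, smul_eq_mul]
    ring
  have h3 := intervalIntegral.integral_add_adjacent_intervals
    (f := fun w => |a - w|) (μ := volume) (a := 0) (b := a) (c := c)
    ((continuous_const.sub continuous_id).abs.continuousOn.intervalIntegrable)
    ((continuous_const.sub continuous_id).abs.continuousOn.intervalIntegrable)
  rw [h1, h2] at h3
  rw [← h3]; ring

lemma integral_abs_affine_le {hh a lam : ℝ} (hh0 : 0 ≤ hh) (ha0 : 0 ≤ a)
    (hlam1 : lam ≤ 1) (halam : a ≤ lam * hh) :
    (∫ v in (0:ℝ)..hh, |a - lam * v|) ≤ hh^2/2 := by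
  rcases le_or_gt lam 0 with hl0 | hl0
  · have ha : a = 0 := le_antisymm (halam.trans (by nlinarith)) ha0
    have : ∀ v ∈ uIcc (0:ℝ) hh, |a - lam * v| ≤ |a - lam * v| := fun _ _ => le_rfl
    calc (∫ v in (0:ℝ)..hh, |a - lam * v|)
        ≤ ∫ v in (0:ℝ)..hh, (1 - lam) * v := by
          apply intervalIntegral.integral_mono_on hh0
          · exact ((continuous_const.sub (continuous_const.mul continuous_id)).abs).continuousOn.intervalIntegrable
          · exact (continuous_const.mul continuous_id).continuousOn.intervalIntegrable
          · intro x hx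
            rw [ha, zero_sub, abs_neg, abs_mul, abs_of_nonneg hx.1]
            have : |lam| ≤ 1 - lam := by
              rw [abs_of_nonpos hl0]; linarith
            nlinarith [hx.1]
      _ ≤ hh^2/2 := by
          rw [intervalIntegral.integral_const_mul, integral_id]
          nlinarith
  · have key : (fun v => |a - lam * v|) = fun v => (fun w => |a - w|) (lam * v) := rfl
    rw [key, intervalIntegral.integral_comp_mul_left (fun w => |a - w|) (ne_of_gt hl0)]
    rw [mul_zero, smul_eq_mul, integral_abs_sub_of_le ha0 halam]
    have h1 : a^2 + (lam*hh - a)^2 ≤ (lam * hh)^2 := by nlinarith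
    have h2 : lam⁻¹ * ((a ^ 2 + (lam * hh - a) ^ 2) / 2) ≤ lam⁻¹ * ((lam*hh)^2 / 2) := by
      apply mul_le_mul_of_nonneg_left _ (by positivity)
      linarith
    calc lam⁻¹ * ((a ^ 2 + (lam * hh - a) ^ 2) / 2) ≤ lam⁻¹ * ((lam*hh)^2/2) := h2
      _ = lam * hh^2/2 := by field_simp
      _ ≤ hh^2/2 := by nlinarith

set_option maxHeartbeats 0 in
theorem switching_vs_averaged_flow_error
    (d m N : ℕ) (hm : 0 < m) (hN : 0 < N) (T r : ℝ) (hT : 0 < T) (hr : 0 < r)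
    (σ : ℝ → ℝ) (K : ℝ)
    (hσ : ∀ x y : ℝ, |σ x - σ y| ≤ K * |x - y|)
    (A W : Fin m → (PiLp 1 (fun _ : Fin d => ℝ) →L[ℝ] PiLp 1 (fun _ : Fin d => ℝ)))
    (b : Fin m → PiLp 1 (fun _ : Fin d => ℝ))
    (Q : ℝ → PiLp 1 (fun _ : Fin d => ℝ) → PiLp 1 (fun _ : Fin d => ℝ))
    (hQ : ∀ (n : ℕ) (i : Fin m),
      ∀ t ∈ Ico ((i : ℝ) * T / (m * N)) (((i : ℝ) + 1) * T / (m * N)),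
        ∀ x, Q (t + n * T / N) x = (m : ℝ) • A i (actVec d σ (W i x + b i)))
    (c L X : ℝ)
    (hc : c = (m : ℝ) * ⨆ i, ‖A i‖ * ‖actVec d σ (b i)‖)
    (hL : L = (m : ℝ) * ⨆ i, K * ‖A i‖ * ‖W i‖)
    (hX : X = c + L * (r + c * T) * Real.exp (L * T))
    (z y : ℝ → PiLp 1 (fun _ : Fin d => ℝ))
    (hz0 : z 0 ∈ ball (0 : PiLp 1 (fun _ : Fin d => ℝ)) r)
    (hy0 : y 0 ∈ ball (0 : PiLp 1 (fun _ : Fin d => ℝ)) r)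
    (hz : ∀ t ∈ Icc (0:ℝ) T, HasDerivAt z (Q t (z t)) t)
    (hy : ∀ t ∈ Icc (0:ℝ) T,
      HasDerivAt y (∑ i, A i (actVec d σ (W i (y t) + b i))) t) :
    ∀ t ∈ Icc (0:ℝ) T,
      ‖z t - y t‖ ≤
        (2 * (T / N) * X + L * X * T ^ 2 / (2 * N) + ‖z 0 - y 0‖) * Real.exp (L * t) := by
  -- basics
  haveI : Nonempty (Fin m) := ⟨⟨0, hm⟩⟩
  have hm' : (0:ℝ) < m := by exact_mod_cast hm
  have hN' : (0:ℝ) < N := by exact_mod_cast hN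
  have hK0 : 0 ≤ K := by
    have h1 := hσ 0 1
    have h2 := abs_nonneg (σ 0 - σ 1)
    norm_num at h1
    linarith
  -- L1 norm formula
  have hnorm : ∀ x : PiLp 1 (fun _ : Fin d => ℝ), ‖x‖ = ∑ i, |x i| := by
    intro x
    rw [PiLp.norm_eq_sum (by norm_num)]
    simp [Real.rpow_one]
  -- actVec is K-Lipschitz
  have hact : ∀ u v : PiLp 1 (fun _ : Fin d => ℝ),
      ‖actVec d σ u - actVec d σ v‖ ≤ K * ‖u - v‖ := by
    intro u v
    rw [hnorm, hnorm, Finset.mul_sum]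
    apply Finset.sum_le_sum
    intro i _
    have : (actVec d σ u - actVec d σ v) i = σ (u i) - σ (v i) := by
      rw [PiLp.sub_apply]; simp [actVec]
    rw [this]
    have : (u - v) i = u i - v i := PiLp.sub_apply _ _ _ _
    rw [this]
    exact hσ (u i) (v i)
  -- fields
  set F : Fin m → PiLp 1 (fun _ : Fin d => ℝ) → PiLp 1 (fun _ : Fin d => ℝ) :=
    fun i x => A i (actVec d σ (W i x + b i)) with hFdef
  set Fb : PiLp 1 (fun _ : Fin d => ℝ) → PiLp 1 (fun _ : Fin d => ℝ) :=
    fun x => ∑ i, F i x with hFbdef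
  have hFlip : ∀ i x x', ‖F i x - F i x'‖ ≤ K * ‖A i‖ * ‖W i‖ * ‖x - x'‖ := by
    intro i x x'
    calc ‖F i x - F i x'‖ = ‖A i (actVec d σ (W i x + b i) - actVec d σ (W i x' + b i))‖ := by
          rw [map_sub]
      _ ≤ ‖A i‖ * ‖actVec d σ (W i x + b i) - actVec d σ (W i x' + b i)‖ :=
          (A i).le_opNorm _
      _ ≤ ‖A i‖ * (K * ‖(W i x + b i) - (W i x' + b i)‖) := by
          apply mul_le_mul_of_nonneg_left (hact _ _) (norm_nonneg _)
      _ = ‖A i‖ * (K * ‖W i (x - x')‖) := by rw [add_sub_add_right_eq_sub, map_sub]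
      _ ≤ ‖A i‖ * (K * (‖W i‖ * ‖x - x'‖)) := by
          apply mul_le_mul_of_nonneg_left _ (norm_nonneg _)
          exact mul_le_mul_of_nonneg_left ((W i).le_opNorm _) hK0
      _ = K * ‖A i‖ * ‖W i‖ * ‖x - x'‖ := by ring
  have hFbound : ∀ i x, ‖F i x‖ ≤ K * ‖A i‖ * ‖W i‖ * ‖x‖ + ‖A i‖ * ‖actVec d σ (b i)‖ := by
    intro i x
    have h1 : ‖F i x - A i (actVec d σ (b i))‖ ≤ K * ‖A i‖ * ‖W i‖ * ‖x‖ := by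
      calc ‖F i x - A i (actVec d σ (b i))‖
          = ‖A i (actVec d σ (W i x + b i) - actVec d σ (b i))‖ := by rw [map_sub]
        _ ≤ ‖A i‖ * ‖actVec d σ (W i x + b i) - actVec d σ (b i)‖ := (A i).le_opNorm _
        _ ≤ ‖A i‖ * (K * ‖(W i x + b i) - b i‖) := by
            apply mul_le_mul_of_nonneg_left (hact _ _) (norm_nonneg _)
        _ = ‖A i‖ * (K * ‖W i x‖) := by rw [add_sub_cancel_right]
        _ ≤ ‖A i‖ * (K * (‖W i‖ * ‖x‖)) := by
            apply mul_le_mul_of_nonneg_left _ (norm_nonneg _)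
            exact mul_le_mul_of_nonneg_left ((W i).le_opNorm _) hK0
        _ = K * ‖A i‖ * ‖W i‖ * ‖x‖ := by ring
    calc ‖F i x‖ ≤ ‖F i x - A i (actVec d σ (b i))‖ + ‖A i (actVec d σ (b i))‖ := by
          have := norm_add_le (F i x - A i (actVec d σ (b i))) (A i (actVec d σ (b i)))
          simpa using this
      _ ≤ K * ‖A i‖ * ‖W i‖ * ‖x‖ + ‖A i‖ * ‖actVec d σ (b i)‖ :=
          add_le_add h1 ((A i).le_opNorm _)
  -- sup bounds
  have hLi : ∀ i, (m:ℝ) * (K * ‖A i‖ * ‖W i‖) ≤ L := by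
    intro i
    rw [hL]
    exact mul_le_mul_of_nonneg_left
      (le_ciSup (f := fun i => K * ‖A i‖ * ‖W i‖) (Set.Finite.bddAbove (Set.finite_range _)) i) hm'.le
  have hci : ∀ i, (m:ℝ) * (‖A i‖ * ‖actVec d σ (b i)‖) ≤ c := by
    intro i
    rw [hc]
    exact mul_le_mul_of_nonneg_left
      (le_ciSup (f := fun i => ‖A i‖ * ‖actVec d σ (b i)‖) (Set.Finite.bddAbove (Set.finite_range _)) i) hm'.le
  have hL0 : 0 ≤ L := le_trans (by positivity) (hLi ⟨0, hm⟩)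
  have hc0 : 0 ≤ c := le_trans (by positivity) (hci ⟨0, hm⟩)
  -- bounds on averaged field
  have hFbLip : ∀ x x', ‖Fb x - Fb x'‖ ≤ L * ‖x - x'‖ := by
    intro x x'
    rw [hFbdef]
    simp only
    rw [← Finset.sum_sub_distrib]
    calc ‖∑ i, (F i x - F i x')‖ ≤ ∑ i, ‖F i x - F i x'‖ := norm_sum_le _ _
      _ ≤ ∑ _i : Fin m, (L / m) * ‖x - x'‖ := by
          apply Finset.sum_le_sum
          intro i _
          refine (hFlip i x x').trans ?_
          apply mul_le_mul_of_nonneg_right _ (norm_nonneg _)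
          rw [le_div_iff₀ hm']
          linarith [hLi i]
      _ = L * ‖x - x'‖ := by
          rw [Finset.sum_const, Finset.card_univ, Fintype.card_fin, nsmul_eq_mul]
          field_simp
  have hFbBound : ∀ x, ‖Fb x‖ ≤ c + L * ‖x‖ := by
    intro x
    rw [hFbdef]
    simp only
    calc ‖∑ i, F i x‖ ≤ ∑ i, ‖F i x‖ := norm_sum_le _ _
      _ ≤ ∑ _i : Fin m, ((L/m) * ‖x‖ + c/m) := by
          apply Finset.sum_le_sum
          intro i _
          refine (hFbound i x).trans ?_
          have h1 : K * ‖A i‖ * ‖W i‖ ≤ L / m := by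
            rw [le_div_iff₀ hm']; linarith [hLi i]
          have h2 : ‖A i‖ * ‖actVec d σ (b i)‖ ≤ c / m := by
            rw [le_div_iff₀ hm']; linarith [hci i]
          have := mul_le_mul_of_nonneg_right h1 (norm_nonneg x)
          linarith
      _ = c + L * ‖x‖ := by
          rw [Finset.sum_const, Finset.card_univ, Fintype.card_fin, nsmul_eq_mul]
          field_simp
          ring
  -- nat-indexed fields
  set FF : ℕ → PiLp 1 (fun _ : Fin d => ℝ) → PiLp 1 (fun _ : Fin d => ℝ) :=
    fun i => if h : i < m then F ⟨i, h⟩ else 0 with hFFdef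
  have hFFeq : ∀ (i : ℕ) (h : i < m), FF i = F ⟨i, h⟩ := by
    intro i h
    rw [hFFdef]
    simp only [dif_pos h]
  have hFbFF : ∀ x, Fb x = ∑ i ∈ Finset.range m, FF i x := by
    intro x
    rw [hFbdef]
    simp only
    rw [← Fin.sum_univ_eq_sum_range (fun i => FF i x) m]
    apply Finset.sum_congr rfl
    intro i _
    rw [hFFeq i i.2]
  -- index machinery
  set τ0 : ℝ := T / (m * N) with hτ0def
  have hτ0 : 0 < τ0 := by positivity
  set q : ℝ → ℕ := fun s => (⌊s / τ0⌋).toNat with hqdef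
  have hfloor : ∀ s : ℝ, 0 ≤ s → (q s : ℝ) * τ0 ≤ s ∧ s < ((q s : ℝ) + 1) * τ0 := by
    intro s hs
    have h0 : (0:ℤ) ≤ ⌊s / τ0⌋ := Int.floor_nonneg.2 (by positivity)
    have hcast : ((q s : ℤ) : ℝ) = (⌊s / τ0⌋ : ℝ) := by
      rw [hqdef]; simp only
      rw [Int.toNat_of_nonneg h0]
    have hq1 : (q s : ℝ) ≤ s / τ0 := by
      rw [show ((q s : ℝ)) = ((q s : ℤ) : ℝ) by push_cast; ring, hcast]
      exact Int.floor_le _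
    have hq2 : s / τ0 < (q s : ℝ) + 1 := by
      rw [show ((q s : ℝ)) = ((q s : ℤ) : ℝ) by push_cast; ring, hcast]
      exact Int.lt_floor_add_one _
    constructor
    · calc (q s : ℝ) * τ0 ≤ (s / τ0) * τ0 := mul_le_mul_of_nonneg_right hq1 hτ0.le
        _ = s := by field_simp
    · calc s = (s / τ0) * τ0 := by field_simp
        _ < ((q s : ℝ) + 1) * τ0 := mul_lt_mul_of_pos_right hq2 hτ0
  -- value of q on subintervals
  have hqval : ∀ (p : ℕ) (s : ℝ), (p : ℝ) * τ0 ≤ s → s < ((p : ℝ) + 1) * τ0 → q s = p := by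
    intro p s h1 h2
    have hfl : ⌊s / τ0⌋ = (p : ℤ) := by
      rw [Int.floor_eq_iff]
      constructor
      · push_cast
        rw [le_div_iff₀ hτ0]; linarith
      · push_cast
        rw [div_lt_iff₀ hτ0]; linarith
    rw [hqdef]; simp only [hfl, Int.toNat_natCast]
  have hidx : ∀ s : ℝ, q s % m < m := fun s => Nat.mod_lt _ hm
  -- Q equals the switching field
  have hTN : T / N = (m : ℝ) * τ0 := by rw [hτ0def]; field_simp
  have hQeq : ∀ s : ℝ, 0 ≤ s → ∀ x, Q s x = (m:ℝ) • F ⟨q s % m, hidx s⟩ x := by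
    intro s hs x
    obtain ⟨h1, h2⟩ := hfloor s hs
    set n := q s / m with hn
    set i := q s % m with hi
    have hqsum : m * n + i = q s := Nat.div_add_mod _ _
    have key := hQ n ⟨i, hidx s⟩ (s - n * (T / N)) ?_ x
    · have : s - n * (T/N) + n * T / N = s := by ring
      rw [this] at key
      exact key
    · have hcast : ((m * n + i : ℕ) : ℝ) = (m:ℝ) * n + i := by push_cast; ring
      have hq' : ((q s : ℕ) : ℝ) = (m:ℝ) * n + i := by rw [← hqsum, hcast]
      constructor
      · show ((⟨i, hidx s⟩ : Fin m) : ℝ) * T / (m * N) ≤ s - n * (T/N)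
        have : ((⟨i, hidx s⟩ : Fin m) : ℝ) = (i:ℝ) := rfl
        rw [this, hTN]
        have : (i:ℝ) * T / (m*N) = (i:ℝ) * τ0 := by rw [hτ0def]; ring
        rw [this]
        have := h1
        rw [hq'] at this
        nlinarith
      · show s - n * (T/N) < (((⟨i, hidx s⟩ : Fin m) : ℝ) + 1) * T / (m * N)
        have hco : ((⟨i, hidx s⟩ : Fin m) : ℝ) = (i:ℝ) := rfl
        rw [hco, hTN]
        have he : ((i:ℝ) + 1) * T / (m*N) = ((i:ℝ)+1) * τ0 := by rw [hτ0def]; ring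
        rw [he]
        have := h2
        rw [hq'] at this
        nlinarith
  -- measurable switching field along z
  set G : ℝ → PiLp 1 (fun _ : Fin d => ℝ) :=
    fun s => ∑ i : Fin m, Set.indicator {s' : ℝ | q s' % m = (i:ℕ)}
      (fun s' => (m:ℝ) • F i (z s')) s with hGdef
  have hGeq : ∀ s : ℝ, G s = (m:ℝ) • F ⟨q s % m, hidx s⟩ (z s) := by
    intro s
    rw [hGdef]
    simp only
    rw [Finset.sum_eq_single (⟨q s % m, hidx s⟩ : Fin m)]
    · rw [Set.indicator_of_mem]
      exact rfl
    · intro i _ hne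
      apply Set.indicator_of_notMem
      intro hmem
      apply hne
      exact Fin.ext (by simpa using hmem.symm)
    · intro habs
      exact absurd (Finset.mem_univ _) habs
  have hQG : ∀ s : ℝ, 0 ≤ s → Q s (z s) = G s := by
    intro s hs
    rw [hGeq s, hQeq s hs]
  -- continuity of z, y
  have hzc : ContinuousOn z (Icc 0 T) :=
    fun s hs => ((hz s hs).continuousAt).continuousWithinAt
  have hyc : ContinuousOn y (Icc 0 T) :=
    fun s hs => ((hy s hs).continuousAt).continuousWithinAt
  -- continuity of fields
  have hactc : Continuous (actVec d σ) := by
    have : LipschitzWith (Real.toNNReal K) (actVec d σ) := by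
      apply LipschitzWith.of_dist_le_mul
      intro u v
      rw [dist_eq_norm, dist_eq_norm]
      calc ‖actVec d σ u - actVec d σ v‖ ≤ K * ‖u - v‖ := hact u v
        _ ≤ (Real.toNNReal K : ℝ) * ‖u - v‖ :=
            mul_le_mul_of_nonneg_right (Real.le_coe_toNNReal K) (norm_nonneg _)
    exact this.continuous
  have hFc : ∀ i, Continuous (F i) := by
    intro i
    rw [hFdef]
    exact (A i).continuous.comp (hactc.comp (((W i).continuous).add continuous_const))
  have hFFc : ∀ i ∈ Finset.range m, Continuous (FF i) := by
    intro i hi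
    rw [hFFeq i (Finset.mem_range.1 hi)]
    exact hFc _
  have hFbc : Continuous Fb := by
    rw [hFbdef]
    exact continuous_finset_sum _ (fun i _ => hFc i)
  -- bound for G
  have hGb1 : ∀ s : ℝ, ‖G s‖ ≤ L * ‖z s‖ + c := by
    intro s
    rw [hGeq s]
    set i : Fin m := ⟨q s % m, hidx s⟩
    rw [norm_smul, Real.norm_eq_abs, abs_of_nonneg hm'.le]
    calc (m:ℝ) * ‖F i (z s)‖
        ≤ (m:ℝ) * (K * ‖A i‖ * ‖W i‖ * ‖z s‖ + ‖A i‖ * ‖actVec d σ (b i)‖) :=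
          mul_le_mul_of_nonneg_left (hFbound i (z s)) hm'.le
      _ = ((m:ℝ) * (K * ‖A i‖ * ‖W i‖)) * ‖z s‖ + (m:ℝ) * (‖A i‖ * ‖actVec d σ (b i)‖) := by ring
      _ ≤ L * ‖z s‖ + c := add_le_add (mul_le_mul_of_nonneg_right (hLi i) (norm_nonneg _)) (hci i)
  -- Gronwall bound on ‖z‖
  set R : ℝ := (r + c * T) * Real.exp (L * T) with hRdef
  have hzR : ∀ s ∈ Icc (0:ℝ) T, ‖z s‖ ≤ R := by
    have hz' : ∀ s ∈ Ico (0:ℝ) T, HasDerivWithinAt z (G s) (Ici s) s := by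
      intro s hs
      have := (hz s ⟨hs.1, hs.2.le⟩).hasDerivWithinAt (s := Ici s)
      rwa [hQG s hs.1] at this
    have hb := norm_le_gronwallBound_of_norm_deriv_right_le (f := z) (f' := G)
      (δ := r) (K := L) (ε := c) (a := 0) (b := T) hzc hz'
      (le_of_lt (by simpa [dist_eq_norm] using hz0))
      (fun s _ => hGb1 s)
    intro s hs
    refine (hb s hs).trans ?_
    have hs0 : 0 ≤ s - 0 := by linarith [hs.1]
    have hsT : s - 0 ≤ T := by linarith [hs.2]
    rcases eq_or_ne L 0 with hLz | hLz
    · rw [hLz, gronwallBound_K0, hRdef, hLz]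
      simp only [zero_mul, Real.exp_zero, mul_one]
      nlinarith
    · rw [gronwallBound_of_K_ne_0 hLz, hRdef]
      have hLpos : 0 < L := lt_of_le_of_ne hL0 (Ne.symm hLz)
      have hmono : Real.exp (L * (s - 0)) ≤ Real.exp (L * T) := by
        apply Real.exp_le_exp.2
        nlinarith
      have hkey : Real.exp (L * T) - 1 ≤ L * T * Real.exp (L * T) := by
        have h1 := Real.add_one_le_exp (-(L * T))
        have h2 : Real.exp (-(L*T)) * Real.exp (L*T) = 1 := by
          rw [← Real.exp_add]; simp
        nlinarith [Real.exp_pos (L*T)]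
      have h1 : r * Real.exp (L * (s-0)) ≤ r * Real.exp (L*T) :=
        mul_le_mul_of_nonneg_left hmono hr.le
      have h2 : c / L * (Real.exp (L * (s-0)) - 1) ≤ c / L * (Real.exp (L*T) - 1) := by
        apply mul_le_mul_of_nonneg_left _ (by positivity)
        linarith
      have h3 : c / L * (Real.exp (L*T) - 1) ≤ c * T * Real.exp (L*T) := by
        rw [div_mul_eq_mul_div, div_le_iff₀ hLpos]
        nlinarith
      nlinarith
  have hR0 : 0 ≤ R := by
    rw [hRdef]; positivity
  have hXR : X = c + L * R := by rw [hX, hRdef]; ring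
  have hX0 : 0 ≤ X := by rw [hXR]; positivity
  have hGX : ∀ s ∈ Icc (0:ℝ) T, ‖G s‖ ≤ X := by
    intro s hs
    refine (hGb1 s).trans ?_
    rw [hXR]
    have := mul_le_mul_of_nonneg_left (hzR s hs) hL0
    linarith
  have hFbX : ∀ s ∈ Icc (0:ℝ) T, ‖Fb (z s)‖ ≤ X := by
    intro s hs
    refine (hFbBound (z s)).trans ?_
    rw [hXR]
    have := mul_le_mul_of_nonneg_left (hzR s hs) hL0
    linarith
  -- increments of z
  have hzinc : ∀ s ∈ Icc (0:ℝ) T, ∀ u ∈ Icc s T, ‖z u - z s‖ ≤ X * (u - s) := by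
    intro s hs
    apply norm_image_sub_le_of_norm_deriv_le_segment' (f' := G)
    · intro x hx
      have hx' : x ∈ Icc (0:ℝ) T := ⟨hs.1.trans hx.1, hx.2⟩
      have := (hz x hx').hasDerivWithinAt (s := Icc s T)
      rwa [hQG x hx'.1] at this
    · intro x hx
      exact hGX x ⟨hs.1.trans hx.1, hx.2.le⟩
  have hzabs : ∀ a' ∈ Icc (0:ℝ) T, ∀ b' ∈ Icc (0:ℝ) T, ‖z a' - z b'‖ ≤ X * |a' - b'| := by
    intro a' ha' b' hb'
    rcases le_total b' a' with hle | hle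
    · rw [abs_of_nonneg (by linarith)]
      exact hzinc b' hb' a' ⟨hle, ha'.2⟩
    · rw [abs_of_nonpos (by linarith), ← norm_neg]
      simp only [neg_sub]
      exact hzinc a' ha' b' ⟨hle, hb'.2⟩
  -- measurability / integrability of G
  have hqmeas : Measurable q := by
    rw [hqdef]
    exact (Measurable.of_discrete (f := Int.toNat)).comp
      (Int.measurable_floor.comp (measurable_id.div_const τ0))
  have hGmeasOn : AEStronglyMeasurable G (volume.restrict (Icc (0:ℝ) T)) := by
    rw [hGdef]
    apply Finset.aestronglyMeasurable_fun_sum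
    intro i _
    apply AEStronglyMeasurable.indicator
    · exact (continuous_const_smul ((m:ℝ)) |>.comp (hFc i)).comp_aestronglyMeasurable
        (hzc.aestronglyMeasurable measurableSet_Icc)
    · have hqm : Measurable fun s' => q s' % m :=
        (Measurable.of_discrete (f := fun n : ℕ => n % m)).comp hqmeas
      exact hqm (measurableSet_singleton (i:ℕ))
  set HH : ℝ → PiLp 1 (fun _ : Fin d => ℝ) := fun s => G s - Fb (z s) with hHHdef
  have hHHmeasOn : AEStronglyMeasurable HH (volume.restrict (Icc (0:ℝ) T)) :=
    hGmeasOn.sub ((hFbc.comp_aestronglyMeasurable (hzc.aestronglyMeasurable measurableSet_Icc)))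
  have hHHX : ∀ s ∈ Icc (0:ℝ) T, ‖HH s‖ ≤ 2 * X := by
    intro s hs
    rw [hHHdef]
    calc ‖G s - Fb (z s)‖ ≤ ‖G s‖ + ‖Fb (z s)‖ := norm_sub_le _ _
      _ ≤ X + X := add_le_add (hGX s hs) (hFbX s hs)
      _ = 2 * X := by ring
  have hHHint : IntegrableOn HH (Icc (0:ℝ) T) volume := by
    have h2 : ∀ᵐ x ∂(volume.restrict (Icc (0:ℝ) T)), ‖HH x‖ ≤ 2*X := by
      filter_upwards [MeasureTheory.ae_restrict_mem measurableSet_Icc] with s hs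
      exact hHHX s hs
    haveI : IsFiniteMeasure (volume.restrict (Icc (0:ℝ) T)) := by
      constructor
      rw [Measure.restrict_apply_univ, Real.volume_Icc]
      exact ENNReal.ofReal_lt_top
    exact ⟨hHHmeasOn, MeasureTheory.HasFiniteIntegral.of_bounded h2⟩
  have hHHii : ∀ a' b', a' ∈ Icc (0:ℝ) T → b' ∈ Icc (0:ℝ) T →
      IntervalIntegrable HH volume a' b' := by
    intro a' b' ha' hb'
    rw [intervalIntegrable_iff]
    apply hHHint.mono_set
    intro x hx
    rcases le_total a' b' with h | h
    · rw [Set.uIoc_of_le h] at hx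
      exact ⟨le_trans ha'.1 hx.1.le, le_trans hx.2 hb'.2⟩
    · rw [Set.uIoc_of_ge h] at hx
      exact ⟨le_trans hb'.1 hx.1.le, le_trans hx.2 ha'.2⟩
  -- the averaged-field comparison function
  set w : ℝ → PiLp 1 (fun _ : Fin d => ℝ) := fun u => ∫ s in (0:ℝ)..u, HH s with hwdef
  have hwc : ContinuousOn w (Icc (0:ℝ) T) := by
    have := intervalIntegral.continuousOn_primitive_interval (a := 0) (b := T)
      (f := HH) (μ := volume) (by rwa [Set.uIcc_of_le hT.le])
    rwa [Set.uIcc_of_le hT.le] at this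
  have huIcc : ∀ a' b', a' ∈ Icc (0:ℝ) T → b' ∈ Icc (0:ℝ) T → uIcc a' b' ⊆ Icc (0:ℝ) T := by
    intro a' b' ha' hb'
    exact Set.uIcc_subset_Icc ha' hb'
  have hFbzii : ∀ a' b', a' ∈ Icc (0:ℝ) T → b' ∈ Icc (0:ℝ) T →
      IntervalIntegrable (fun s => Fb (z s)) volume a' b' := by
    intro a' b' ha' hb'
    exact ((hFbc.comp_continuousOn hzc).mono (huIcc a' b' ha' hb')).intervalIntegrable
  have hGii : ∀ a' b', a' ∈ Icc (0:ℝ) T → b' ∈ Icc (0:ℝ) T →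
      IntervalIntegrable G volume a' b' := by
    intro a' b' ha' hb'
    have : G = fun s => HH s + Fb (z s) := by
      funext s
      rw [hHHdef]
      simp only
      abel
    rw [this]
    exact (hHHii a' b' ha' hb').add (hFbzii a' b' ha' hb')
  -- size of T/N
  set hh : ℝ := T / N with hhdef
  have hh0 : 0 < hh := by positivity
  have hhτ : hh = (m:ℝ) * τ0 := hTN
  have hNhh : (N:ℝ) * hh = T := by rw [hhdef]; field_simp
  -- per-period bound
  have hPj : ∀ j : ℕ, j + 1 ≤ N →
      ‖∫ s in ((j:ℝ)*hh)..((j:ℝ)*hh + hh), HH s‖ ≤ L * X * hh^2 / 2 := by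
    intro j hjN
    set t0 : ℝ := (j:ℝ) * hh with ht0def
    have ht00 : 0 ≤ t0 := by positivity
    have hjN' : (j:ℝ) + 1 ≤ (N:ℝ) := by exact_mod_cast hjN
    have ht0T : t0 + hh ≤ T := by nlinarith
    have hmemt0 : t0 ∈ Icc (0:ℝ) T := ⟨ht00, by nlinarith⟩
    have hmemt1 : t0 + hh ∈ Icc (0:ℝ) T := ⟨by nlinarith, ht0T⟩
    set aseq : ℕ → ℝ := fun i => t0 + i * τ0 with haseqdef
    have haseq_mem : ∀ i : ℕ, i ≤ m → aseq i ∈ Icc (0:ℝ) T := by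
      intro i him
      have hi' : (i:ℝ) ≤ (m:ℝ) := by exact_mod_cast him
      have h1 : (i:ℝ) * τ0 ≤ (m:ℝ) * τ0 := by nlinarith
      rw [haseqdef]
      constructor
      · simp only
        positivity
      · simp only
        nlinarith
    set τfun : ℕ → ℝ → ℝ := fun i u => (1/(m:ℝ)) * u + (aseq i - t0/m) with hτfundef
    have hτfun_maps : ∀ i : ℕ, i < m → ∀ u ∈ Icc t0 (t0 + hh),
        τfun i u ∈ Icc (0:ℝ) T := by
      intro i hi u hu
      have h1 : aseq i ≤ τfun i u := by
        rw [hτfundef]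
        simp only
        have : (1/(m:ℝ)) * t0 ≤ (1/(m:ℝ)) * u := by
          apply mul_le_mul_of_nonneg_left hu.1 (by positivity)
        have ht0m : t0 / m = (1/(m:ℝ)) * t0 := by ring
        linarith [this]
      have h2 : τfun i u ≤ aseq i + τ0 := by
        rw [hτfundef]
        simp only
        have h3 : (1/(m:ℝ)) * u ≤ (1/(m:ℝ)) * (t0 + hh) := by
          apply mul_le_mul_of_nonneg_left hu.2 (by positivity)
        have h4 : (1/(m:ℝ)) * hh = τ0 := by
          rw [hhτ]; field_simp
        have h5 : t0/(m:ℝ) = (1/(m:ℝ)) * t0 := by ring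
        have h6 : (1/(m:ℝ)) * (t0 + hh) = (1/(m:ℝ)) * t0 + τ0 := by rw [← h4]; ring
        linarith
      have h5 : aseq i + τ0 = aseq (i+1) := by
        rw [haseqdef]; push_cast; ring
      have h6 := haseq_mem i (le_of_lt hi)
      have h7 := haseq_mem (i+1) hi
      rw [h5] at h2
      exact ⟨le_trans h6.1 h1, le_trans h2 h7.2⟩
    have hτfunc : ∀ i : ℕ, Continuous (τfun i) := by
      intro i
      rw [hτfundef]
      exact (continuous_const.mul continuous_id).add continuous_const
    -- continuity of the composed integrands
    have hcont1 : ∀ i : ℕ, i < m → ContinuousOn (fun u => FF i (z (τfun i u))) (Icc t0 (t0+hh)) := by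
      intro i hi
      rw [hFFeq i hi]
      apply (hFc _).comp_continuousOn
      apply hzc.comp ((hτfunc i).continuousOn)
      intro u hu
      exact hτfun_maps i hi u hu
    have hcont2 : ∀ i : ℕ, ContinuousOn (fun u => FF i (z u)) (Icc (0:ℝ) T) := by
      intro i
      rcases lt_or_ge i m with hi | hi
      · rw [hFFeq i hi]
        exact (hFc _).comp_continuousOn hzc
      · have : FF i = 0 := by rw [hFFdef]; simp only [dif_neg (not_lt.2 hi)]
        rw [this]
        exact continuousOn_const
    -- step 1 : split ∫ G over subintervals
    have haseq0 : aseq 0 = t0 := by rw [haseqdef]; push_cast; ring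
    have haseqm : aseq m = t0 + hh := by
      show t0 + (m:ℝ) * τ0 = t0 + hh
      rw [hhτ]
    have hsplitG : ∫ s in t0..(t0 + hh), G s = ∑ i ∈ Finset.range m, ∫ s in (aseq i)..(aseq (i+1)), G s := by
      rw [← haseqm, ← haseq0]
      exact (intervalIntegral.sum_integral_adjacent_intervals (fun i hi =>
        hGii _ _ (haseq_mem i (le_of_lt (Nat.lt_of_lt_of_le hi (le_refl m)))) (haseq_mem (i+1) hi))).symm
    -- step 2 : identify G on each subinterval
    have hstep2 : ∀ i : ℕ, i < m → ∫ s in (aseq i)..(aseq (i+1)), G s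
        = (m:ℝ) • ∫ s in (aseq i)..(aseq (i+1)), FF i (z s) := by
      intro i hi
      rw [← intervalIntegral.integral_smul]
      apply intervalIntegral.integral_congr_ae
      have hsing : ∀ᵐ (s:ℝ), s ≠ aseq (i+1) := by
        rw [MeasureTheory.ae_iff]
        have : {s : ℝ | ¬ s ≠ aseq (i+1)} = {aseq (i+1)} := by
          ext s; simp
        rw [this]
        exact Real.volume_singleton
      filter_upwards [hsing] with s hne hmem
      have hle : aseq i ≤ aseq (i+1) := by
        rw [haseqdef]; push_cast
        nlinarith [hτ0.le]
      rw [Set.uIoc_of_le hle] at hmem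
      have hIco : s ∈ Ico (aseq i) (aseq (i+1)) := ⟨hmem.1.le, lt_of_le_of_ne hmem.2 hne⟩
      -- q s = j * m + i on this interval
      have hai : aseq i = ((j*m+i : ℕ):ℝ) * τ0 := by
        rw [haseqdef, ht0def, hhτ]; push_cast; ring
      have hai1 : aseq (i+1) = (((j*m+i : ℕ):ℝ) + 1) * τ0 := by
        rw [haseqdef, ht0def, hhτ]; push_cast; ring
      have hqs : q s = j*m + i := by
        apply hqval
        · rw [← hai]; exact hIco.1
        · rw [← hai1]; exact hIco.2
      have hmod : q s % m = i := by
        rw [hqs, Nat.add_comm, Nat.add_mul_mod_self_right, Nat.mod_eq_of_lt hi]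
      have hfin : (⟨q s % m, hidx s⟩ : Fin m) = ⟨i, hi⟩ := Fin.ext hmod
      rw [hGeq s, hFFeq i hi, hfin]
    -- step 3 : change of variables
    have hstep3 : ∀ i : ℕ, i < m → (m:ℝ) • ∫ s in (aseq i)..(aseq (i+1)), FF i (z s)
        = ∫ u in t0..(t0 + hh), FF i (z (τfun i u)) := by
      intro i hi
      have hmne : (1/(m:ℝ)) ≠ 0 := by positivity
      have hcv := intervalIntegral.integral_comp_mul_add (a := t0) (b := t0 + hh)
        (fun x => FF i (z x)) hmne (aseq i - t0/m)
      have he1 : (1/(m:ℝ)) * t0 + (aseq i - t0/m) = aseq i := by field_simp; ring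
      have he2 : (1/(m:ℝ)) * (t0 + hh) + (aseq i - t0/m) = aseq (i+1) := by
        rw [haseqdef, hhτ]; push_cast; field_simp; ring
      rw [he1, he2] at hcv
      have hinv : ((1:ℝ)/(m:ℝ))⁻¹ = (m:ℝ) := by field_simp
      rw [hinv] at hcv
      rw [← hcv]
    -- step 4 : the averaged integral splits as a sum
    have hstep4 : ∫ u in t0..(t0 + hh), Fb (z u)
        = ∑ i ∈ Finset.range m, ∫ u in t0..(t0 + hh), FF i (z u) := by
      rw [intervalIntegral.integral_congr (g := fun u => ∑ i ∈ Finset.range m, FF i (z u))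
        (fun u _ => hFbFF (z u))]
      exact intervalIntegral.integral_finset_sum (fun i hi =>
        (((hcont2 i).mono (huIcc _ _ hmemt0 hmemt1)).intervalIntegrable))
    -- combine into a sum of differences
    have hcomb : ∫ s in t0..(t0 + hh), HH s
        = ∑ i ∈ Finset.range m, ∫ u in t0..(t0 + hh),
            (FF i (z (τfun i u)) - FF i (z u)) := by
      have hHHsub : ∫ s in t0..(t0 + hh), HH s
          = (∫ s in t0..(t0 + hh), G s) - ∫ u in t0..(t0 + hh), Fb (z u) := by
        rw [← intervalIntegral.integral_sub (hGii _ _ hmemt0 hmemt1) (hFbzii _ _ hmemt0 hmemt1)]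
      rw [hHHsub, hsplitG, hstep4, ← Finset.sum_sub_distrib]
      apply Finset.sum_congr rfl
      intro i hi
      have hi' := Finset.mem_range.1 hi
      rw [hstep2 i hi', hstep3 i hi']
      have huIcc2 : uIcc t0 (t0+hh) ⊆ Icc t0 (t0+hh) := by
        rw [Set.uIcc_of_le (by nlinarith : t0 ≤ t0 + hh)]
      have hint1 : IntervalIntegrable (fun u => FF i (z (τfun i u))) volume t0 (t0+hh) :=
        ((hcont1 i hi').mono huIcc2).intervalIntegrable
      have hint2 : IntervalIntegrable (fun u => FF i (z u)) volume t0 (t0+hh) :=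
        ((hcont2 i).mono (huIcc _ _ hmemt0 hmemt1)).intervalIntegrable
      exact (intervalIntegral.integral_sub hint1 hint2).symm
    rw [hcomb]
    have hterm : ∀ i ∈ Finset.range m, ‖∫ u in t0..(t0 + hh), (FF i (z (τfun i u)) - FF i (z u))‖
        ≤ (L/(m:ℝ)) * X * (hh^2/2) := by
      intro i hi
      have hi' := Finset.mem_range.1 hi
      set gbd : ℝ → ℝ := fun u => (L/(m:ℝ) * X) * |τfun i u - u| with hgbddef
      have hgbdc : Continuous gbd := by
        rw [hgbddef]
        exact continuous_const.mul ((hτfunc i).sub continuous_id).abs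
      have hgbdint : IntervalIntegrable gbd volume t0 (t0+hh) := hgbdc.intervalIntegrable _ _
      have hptwise : ∀ u ∈ uIoc t0 (t0+hh), ‖FF i (z (τfun i u)) - FF i (z u)‖ ≤ gbd u := by
        intro u hu
        rw [Set.uIoc_of_le (by nlinarith : t0 ≤ t0 + hh)] at hu
        have huIcc' : u ∈ Icc t0 (t0+hh) := ⟨hu.1.le, hu.2⟩
        have hu0T : u ∈ Icc (0:ℝ) T := ⟨le_trans ht00 huIcc'.1, le_trans huIcc'.2 ht0T⟩
        have hτu : τfun i u ∈ Icc (0:ℝ) T := hτfun_maps i hi' u huIcc'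
        rw [hFFeq i hi', hgbddef]
        have hKAW : 0 ≤ K * ‖A ⟨i,hi'⟩‖ * ‖W ⟨i,hi'⟩‖ :=
          mul_nonneg (mul_nonneg hK0 (norm_nonneg _)) (norm_nonneg _)
        calc ‖F ⟨i,hi'⟩ (z (τfun i u)) - F ⟨i,hi'⟩ (z u)‖
            ≤ K * ‖A ⟨i,hi'⟩‖ * ‖W ⟨i,hi'⟩‖ * ‖z (τfun i u) - z u‖ := hFlip _ _ _
          _ ≤ K * ‖A ⟨i,hi'⟩‖ * ‖W ⟨i,hi'⟩‖ * (X * |τfun i u - u|) :=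
              mul_le_mul_of_nonneg_left (hzabs _ hτu _ hu0T) hKAW
          _ ≤ (L/(m:ℝ)) * (X * |τfun i u - u|) := by
              apply mul_le_mul_of_nonneg_right _ (mul_nonneg hX0 (abs_nonneg _))
              rw [le_div_iff₀ hm']
              linarith [hLi ⟨i,hi'⟩]
          _ = (L/(m:ℝ) * X) * |τfun i u - u| := by ring
      have hae : ∀ᵐ u ∂(volume.restrict (uIoc t0 (t0+hh))),
          ‖FF i (z (τfun i u)) - FF i (z u)‖ ≤ gbd u := by
        filter_upwards [MeasureTheory.ae_restrict_mem measurableSet_uIoc] with u hu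
        exact hptwise u hu
      have hnorm1 := intervalIntegral.norm_integral_le_abs_of_norm_le hae hgbdint
      have habs : (∫ u in t0..(t0+hh), |τfun i u - u|) ≤ hh^2/2 := by
        have hshift := intervalIntegral.integral_comp_add_right (a := (0:ℝ)) (b := hh)
          (fun u => |τfun i u - u|) t0
        have heq : ∀ v : ℝ, |τfun i (v + t0) - (v + t0)| = |(i:ℝ)*τ0 - (1 - 1/(m:ℝ))*v| := by
          intro v
          congr 1
          rw [hτfundef, haseqdef]
          simp only
          field_simp
          ring
        rw [intervalIntegral.integral_congr (g := fun v => |(i:ℝ)*τ0 - (1 - 1/(m:ℝ))*v|)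
          (fun v _ => heq v)] at hshift
        rw [zero_add, add_comm] at hshift
        rw [← hshift]
        apply integral_abs_affine_le hh0.le (mul_nonneg (Nat.cast_nonneg i) hτ0.le)
        · have : (0:ℝ) < 1/(m:ℝ) := by positivity
          linarith
        · have hi2 : (i:ℝ) + 1 ≤ (m:ℝ) := by exact_mod_cast Nat.succ_le_of_lt hi'
          have hlam : (1 - 1/(m:ℝ)) * hh = ((m:ℝ) - 1) * τ0 := by
            rw [hhτ]; field_simp
          rw [hlam]
          nlinarith [mul_nonneg (by linarith : (0:ℝ) ≤ (m:ℝ) - 1 - (i:ℝ)) hτ0.le]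
      have hval : (∫ u in t0..(t0+hh), gbd u)
          = (L/(m:ℝ) * X) * ∫ u in t0..(t0+hh), |τfun i u - u| := by
        rw [hgbddef]
        exact intervalIntegral.integral_const_mul _ _
      have hnn : 0 ≤ ∫ u in t0..(t0+hh), gbd u := by
        apply intervalIntegral.integral_nonneg (by nlinarith : t0 ≤ t0 + hh)
        intro u _
        rw [hgbddef]
        exact mul_nonneg (mul_nonneg (div_nonneg hL0 hm'.le) hX0) (abs_nonneg _)
      have hLmX : 0 ≤ L/(m:ℝ) * X := mul_nonneg (div_nonneg hL0 hm'.le) hX0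
      calc ‖∫ u in t0..(t0 + hh), (FF i (z (τfun i u)) - FF i (z u))‖
          ≤ |∫ u in t0..(t0+hh), gbd u| := hnorm1
        _ = ∫ u in t0..(t0+hh), gbd u := abs_of_nonneg hnn
        _ = (L/(m:ℝ) * X) * ∫ u in t0..(t0+hh), |τfun i u - u| := hval
        _ ≤ (L/(m:ℝ) * X) * (hh^2/2) := mul_le_mul_of_nonneg_left habs hLmX
        _ = (L/(m:ℝ)) * X * (hh^2/2) := by ring
    calc ‖∑ i ∈ Finset.range m, ∫ u in t0..(t0 + hh), (FF i (z (τfun i u)) - FF i (z u))‖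
        ≤ ∑ i ∈ Finset.range m, ‖∫ u in t0..(t0 + hh), (FF i (z (τfun i u)) - FF i (z u))‖ :=
          norm_sum_le _ _
      _ ≤ ∑ _i ∈ Finset.range m, (L/(m:ℝ)) * X * (hh^2/2) := Finset.sum_le_sum hterm
      _ = L * X * hh^2 / 2 := by
          rw [Finset.sum_const, Finset.card_range, nsmul_eq_mul]
          field_simp
  -- bound on w
  have hjmem : ∀ j : ℕ, j ≤ N → ((j:ℝ)*hh) ∈ Icc (0:ℝ) T := by
    intro j hj
    have hj' : (j:ℝ) ≤ (N:ℝ) := by exact_mod_cast hj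
    exact ⟨mul_nonneg (Nat.cast_nonneg j) hh0.le, by nlinarith⟩
  have hwB : ∀ u ∈ Icc (0:ℝ) T, ‖w u‖ ≤ 2 * hh * X + L * X * T^2/(2*N) := by
    intro u hu
    set k : ℕ := (⌊u / hh⌋).toNat with hkdef
    have h0 : (0:ℤ) ≤ ⌊u / hh⌋ := Int.floor_nonneg.2 (div_nonneg hu.1 hh0.le)
    have hcast : ((k : ℤ) : ℝ) = (⌊u / hh⌋ : ℝ) := by
      rw [hkdef, Int.toNat_of_nonneg h0]
    have hq1 : (k:ℝ) ≤ u / hh := by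
      rw [show ((k:ℝ)) = ((k:ℤ):ℝ) by push_cast; ring, hcast]
      exact Int.floor_le _
    have hq2 : u / hh < (k:ℝ) + 1 := by
      rw [show ((k:ℝ)) = ((k:ℤ):ℝ) by push_cast; ring, hcast]
      exact Int.lt_floor_add_one _
    have hk1 : (k:ℝ) * hh ≤ u := by
      calc (k:ℝ)*hh ≤ (u/hh)*hh := mul_le_mul_of_nonneg_right hq1 hh0.le
        _ = u := by field_simp
    have hk2 : u ≤ ((k:ℝ)+1) * hh := by
      calc u = (u/hh)*hh := by field_simp
        _ ≤ ((k:ℝ)+1)*hh := mul_le_mul_of_nonneg_right hq2.le hh0.le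
    have hkN : k ≤ N := by
      have hkr : (k:ℝ) ≤ (N:ℝ) := by
        by_contra hcon
        push_neg at hcon
        have hNk : (N:ℝ) + 1 ≤ (k:ℝ) := by
          have : (N:ℕ) < k := by exact_mod_cast hcon
          exact_mod_cast this
        have : ((N:ℝ))*hh < (k:ℝ)*hh := by nlinarith
        rw [hNhh] at this
        nlinarith [hu.2]
      exact_mod_cast hkr
    have hkhmem : (k:ℝ)*hh ∈ Icc (0:ℝ) T := hjmem k hkN
    have hadj := intervalIntegral.sum_integral_adjacent_intervals
      (a := fun j : ℕ => (j:ℝ)*hh) (n := k) (f := HH) (μ := volume)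
      (fun j hj => hHHii _ _ (hjmem j (le_of_lt (lt_of_lt_of_le hj hkN)))
        (hjmem (j+1) (Nat.succ_le_of_lt (lt_of_lt_of_le hj hkN))))
    simp only [Nat.cast_zero, zero_mul] at hadj
    have htail := intervalIntegral.integral_add_adjacent_intervals
      (a := (0:ℝ)) (b := (k:ℝ)*hh) (c := u) (f := HH) (μ := volume)
      (hHHii _ _ (left_mem_Icc.2 hT.le) hkhmem) (hHHii _ _ hkhmem hu)
    have hsplit : w u = (∑ j ∈ Finset.range k,
        ∫ s in ((j:ℝ)*hh)..(((j:ℕ)+1:ℕ):ℝ)*hh, HH s) + ∫ s in ((k:ℝ)*hh)..u, HH s := by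
      rw [hwdef]
      simp only
      rw [← htail, hadj]
    have hterm2 : ∀ j ∈ Finset.range k,
        ‖∫ s in ((j:ℝ)*hh)..(((j:ℕ)+1:ℕ):ℝ)*hh, HH s‖ ≤ L * X * hh^2/2 := by
      intro j hj
      have hj' := Finset.mem_range.1 hj
      have hend : (((j:ℕ)+1:ℕ):ℝ)*hh = (j:ℝ)*hh + hh := by push_cast; ring
      rw [hend]
      exact hPj j (Nat.succ_le_of_lt (lt_of_lt_of_le hj' hkN))
    have htailb : ‖∫ s in ((k:ℝ)*hh)..u, HH s‖ ≤ 2*X*hh := by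
      have hb := intervalIntegral.norm_integral_le_of_norm_le_const (C := 2*X)
        (f := HH) (a := (k:ℝ)*hh) (b := u) ?_
      · refine hb.trans ?_
        rw [abs_of_nonneg (by linarith : (0:ℝ) ≤ u - (k:ℝ)*hh)]
        have : u - (k:ℝ)*hh ≤ hh := by nlinarith
        nlinarith [hX0]
      · intro x hx
        rw [Set.uIoc_of_le hk1] at hx
        exact hHHX x ⟨le_trans hkhmem.1 hx.1.le, le_trans hx.2 hu.2⟩
    have hsum : ‖w u‖ ≤ (k:ℝ) * (L * X * hh^2/2) + 2*X*hh := by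
      rw [hsplit]
      calc ‖(∑ j ∈ Finset.range k, ∫ s in ((j:ℝ)*hh)..(((j:ℕ)+1:ℕ):ℝ)*hh, HH s)
            + ∫ s in ((k:ℝ)*hh)..u, HH s‖
          ≤ ‖∑ j ∈ Finset.range k, ∫ s in ((j:ℝ)*hh)..(((j:ℕ)+1:ℕ):ℝ)*hh, HH s‖
            + ‖∫ s in ((k:ℝ)*hh)..u, HH s‖ := norm_add_le _ _
        _ ≤ (∑ _j ∈ Finset.range k, L * X * hh^2/2) + 2*X*hh := by
            apply add_le_add _ htailb
            exact (norm_sum_le _ _).trans (Finset.sum_le_sum hterm2)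
        _ = (k:ℝ) * (L * X * hh^2/2) + 2*X*hh := by
            rw [Finset.sum_const, Finset.card_range, nsmul_eq_mul]
    refine hsum.trans ?_
    have hkr : (k:ℝ) ≤ (N:ℝ) := by exact_mod_cast hkN
    have h1 : (k:ℝ) * (L * X * hh^2/2) ≤ (N:ℝ) * (L * X * hh^2/2) :=
      mul_le_mul_of_nonneg_right hkr (by
        have h2 : 0 ≤ L * X * hh^2 := mul_nonneg (mul_nonneg hL0 hX0) (sq_nonneg hh)
        linarith)
    have h2 : (N:ℝ) * (L * X * hh^2/2) = L * X * T^2/(2*N) := by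
      rw [hhdef]; field_simp
    linarith
  -- final Gronwall comparison
  set C0 : ℝ := 2 * hh * X + L * X * T^2/(2*N) with hC0def
  set v : ℝ → PiLp 1 (fun _ : Fin d => ℝ) := fun u => z u - y u - w u with hvdef
  have hw0 : w 0 = 0 := by
    show (∫ s in (0:ℝ)..(0:ℝ), HH s) = 0
    exact intervalIntegral.integral_same
  have hv0 : ‖v 0‖ ≤ ‖z 0 - y 0‖ := by
    have hv00 : v 0 = z 0 - y 0 := by
      show z 0 - y 0 - w 0 = z 0 - y 0
      rw [hw0]; abel
    rw [hv00]
  have hvc : ContinuousOn v (Icc (0:ℝ) T) := (hzc.sub hyc).sub hwc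
  have hv' : ∀ s ∈ Ico (0:ℝ) T, HasDerivWithinAt v (Fb (z s) - Fb (y s)) (Ici s) s := by
    intro s hs
    have hsIcc : s ∈ Icc (0:ℝ) T := ⟨hs.1, hs.2.le⟩
    have hzd : HasDerivWithinAt z (Q s (z s)) (Ici s) s := (hz s hsIcc).hasDerivWithinAt
    have hyd : HasDerivWithinAt y (Fb (y s)) (Ici s) s := (hy s hsIcc).hasDerivWithinAt
    have hwd : HasDerivWithinAt w (HH s) (Ici s) s := by
      have hIcoT : Ico s T ∈ nhdsWithin s (Ici s) :=
        Ico_mem_nhdsGE_of_mem ⟨le_refl s, hs.2⟩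
      have hIccT : Icc (0:ℝ) T ∈ nhdsWithin s (Ici s) :=
        Filter.mem_of_superset hIcoT (fun x hx => ⟨le_trans hs.1 hx.1, hx.2.le⟩)
      have hIooT : Ioo s T ∈ nhdsWithin s (Ioi s) :=
        Ioo_mem_nhdsGT_of_mem ⟨le_refl s, hs.2⟩
      have hIccT' : Icc (0:ℝ) T ∈ nhdsWithin s (Ioi s) :=
        Filter.mem_of_superset hIooT (fun x hx => ⟨le_trans hs.1 hx.1.le, hx.2.le⟩)
      have hsmf : StronglyMeasurableAtFilter HH (nhdsWithin s (Ioi s)) volume :=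
        ⟨Icc (0:ℝ) T, hIccT', hHHmeasOn⟩
      have hfl := hfloor s hs.1
      have hIcomem : Ico ((q s : ℝ)*τ0) (((q s : ℝ)+1)*τ0) ∈ nhdsWithin s (Ici s) :=
        Ico_mem_nhdsGE_of_mem ⟨hfl.1, hfl.2⟩
      have hGcong : ∀ x ∈ Ico ((q s : ℝ)*τ0) (((q s : ℝ)+1)*τ0),
          G x = (m:ℝ) • F ⟨q s % m, hidx s⟩ (z x) := by
        intro x hx
        have hqx : q x = q s := hqval (q s) x hx.1 hx.2
        have hfin : (⟨q x % m, hidx x⟩ : Fin m) = ⟨q s % m, hidx s⟩ :=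
          Fin.ext (show q x % m = q s % m by rw [hqx])
        rw [hGeq x, hfin]
      have hzca : ContinuousAt z s := (hz s hsIcc).continuousAt
      have hGcont : ContinuousWithinAt G (Ici s) s := by
        apply ContinuousWithinAt.congr_of_eventuallyEq
          (f := fun x => (m:ℝ) • F ⟨q s % m, hidx s⟩ (z x))
        · exact (((hFc _).continuousAt.comp hzca).const_smul ((m:ℝ))).continuousWithinAt
        · filter_upwards [hIcomem] with x hx using hGcong x hx
        · exact hGcong s ⟨hfl.1, hfl.2⟩
      have hHHcont : ContinuousWithinAt HH (Ioi s) s := by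
        apply ContinuousWithinAt.sub (hGcont.mono (Ioi_subset_Ici (le_refl s)))
        exact (hFbc.continuousAt.comp hzca).continuousWithinAt
      exact intervalIntegral.integral_hasDerivWithinAt_right
        (hHHii 0 s (left_mem_Icc.2 hT.le) hsIcc) hsmf hHHcont
    have hcomb2 := (hzd.sub hyd).sub hwd
    have hval : Q s (z s) - Fb (y s) - HH s = Fb (z s) - Fb (y s) := by
      have hHHs : HH s = G s - Fb (z s) := rfl
      rw [hHHs, hQG s hs.1]
      abel
    rw [hval] at hcomb2
    exact hcomb2
  have hbound : ∀ s ∈ Ico (0:ℝ) T, ‖Fb (z s) - Fb (y s)‖ ≤ L * ‖v s‖ + L * C0 := by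
    intro s hs
    have hsIcc : s ∈ Icc (0:ℝ) T := ⟨hs.1, hs.2.le⟩
    have h1 : z s - y s = v s + w s := by
      show z s - y s = (z s - y s - w s) + w s
      abel
    have h2 : L * ‖w s‖ ≤ L * C0 := mul_le_mul_of_nonneg_left (hwB s hsIcc) hL0
    calc ‖Fb (z s) - Fb (y s)‖ ≤ L * ‖z s - y s‖ := hFbLip _ _
      _ ≤ L * (‖v s‖ + ‖w s‖) :=
          mul_le_mul_of_nonneg_left (by rw [h1]; exact norm_add_le _ _) hL0
      _ = L * ‖v s‖ + L * ‖w s‖ := by ring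
      _ ≤ L * ‖v s‖ + L * C0 := by linarith
  have hgron := norm_le_gronwallBound_of_norm_deriv_right_le (f := v)
    (f' := fun s => Fb (z s) - Fb (y s)) (δ := ‖z 0 - y 0‖) (K := L) (ε := L * C0)
    (a := 0) (b := T) hvc hv' hv0 hbound
  intro t ht
  have hg := hgron t ht
  rw [sub_zero] at hg
  have hwt := hwB t ht
  have hzy : ‖z t - y t‖ ≤ ‖v t‖ + ‖w t‖ := by
    have h1 : z t - y t = v t + w t := by
      show z t - y t = (z t - y t - w t) + w t
      abel
    rw [h1]; exact norm_add_le _ _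
  rcases eq_or_ne L 0 with hLz | hLz
  · rw [hLz] at hg
    rw [gronwallBound_K0] at hg
    simp only [zero_mul, mul_zero] at hg
    rw [hLz, zero_mul, Real.exp_zero, mul_one]
    linarith
  · rw [gronwallBound_of_K_ne_0 hLz] at hg
    simp only at hg
    have hLC : L * C0 / L = C0 := by field_simp
    rw [hLC] at hg
    have he1 : C0 * (Real.exp (L*t) - 1) = C0 * Real.exp (L*t) - C0 := by ring
    have he2 : (C0 + ‖z 0 - y 0‖) * Real.exp (L*t)
        = C0 * Real.exp (L*t) + ‖z 0 - y 0‖ * Real.exp (L*t) := by ring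
    rw [he2]
    rw [he1] at hg
    linarith
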